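/- Let t be a continuous function on an open set U' ⊆ ℝⁿ and let f ∈ C^∞(U' × U'). Let φ ∈ D(ℝⁿ) with ∫φ = 1 and vanishing moments of orders 1 through k. Then for every compact K ⊆ U', sup_{x∈K} |∫ (f(x,y) − f(x,x))·ε^{−n}φ((y−x)/ε) dy| = O(ε^{k+1}) as ε → 0. -/

import Mathlib

open MeasureTheory Set

noncomputable section

section aux
variable {G : Type*} [NormedAddCommGroup G] [NormedSpace ℝ G]

lemma hasDerivAt_iterchain {f : G → ℝ} {V : Set G} (hV : IsOpen V)
    (hf : ContDiffOn ℝ (⊤ : ℕ∞) f V) (p w : G) (j : ℕ) {s : ℝ}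
    (hs : p + s • w ∈ V) :
    HasDerivAt (fun s' : ℝ => iteratedFDeriv ℝ j f (p + s' • w) (fun _ => w))
      (iteratedFDeriv ℝ (j + 1) f (p + s • w) (fun _ => w)) s := by
  have hdiff : DifferentiableAt ℝ (iteratedFDeriv ℝ j f) (p + s • w) := by
    have h1 : DifferentiableOn ℝ (iteratedFDerivWithin ℝ j f V) V :=
      hf.differentiableOn_iteratedFDerivWithin
        (by exact_mod_cast lt_top_iff_ne_top.2 (by simp)) hV.uniqueDiffOn
    have h2 : DifferentiableAt ℝ (iteratedFDerivWithin ℝ j f V) (p + s • w) :=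
      (h1 (p + s • w) hs).differentiableAt (hV.mem_nhds hs)
    exact h2.congr_of_eventuallyEq <|
      Filter.eventuallyEq_of_mem (hV.mem_nhds hs)
        (fun y hy => (iteratedFDerivWithin_of_isOpen j hV hy).symm)
  have hγ : HasDerivAt (fun s' : ℝ => p + s' • w) w s := by
    simpa using ((hasDerivAt_id s).smul_const w).const_add p
  have h3 : HasDerivAt (fun s' : ℝ => iteratedFDeriv ℝ j f (p + s' • w))
      (fderiv ℝ (iteratedFDeriv ℝ j f) (p + s • w) w) s :=
    hdiff.hasFDerivAt.comp_hasDerivAt s hγ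
  have h4 := ((ContinuousMultilinearMap.apply ℝ (fun _ : Fin j => G) ℝ
      (fun _ => w)).hasFDerivAt.comp_hasDerivAt s h3)
  rw [iteratedFDeriv_succ_apply_left]
  exact h4

lemma iterderiv_line {f : G → ℝ} {V : Set G} (hV : IsOpen V)
    (hf : ContDiffOn ℝ (⊤ : ℕ∞) f V) (p w : G) (j : ℕ) :
    ∀ s : ℝ, p + s • w ∈ V →
      iteratedDeriv j (fun s' : ℝ => f (p + s' • w)) s
        = iteratedFDeriv ℝ j f (p + s • w) (fun _ => w) := by
  induction j with
  | zero => intro s hs; simp [iteratedFDeriv_zero_apply]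
  | succ j IH =>
    intro s hs
    have hSopen : IsOpen {s' : ℝ | p + s' • w ∈ V} :=
      hV.preimage (by continuity)
    have hev : iteratedDeriv j (fun s' : ℝ => f (p + s' • w))
        =ᶠ[nhds s] fun s' => iteratedFDeriv ℝ j f (p + s' • w) (fun _ => w) :=
      Filter.eventuallyEq_of_mem (hSopen.mem_nhds hs) (fun s' hs' => IH s' hs')
    rw [iteratedDeriv_succ, hev.deriv_eq]
    exact (hasDerivAt_iterchain hV hf p w j hs).deriv

lemma hasDerivAt_iterderiv_line {f : G → ℝ} {V : Set G} (hV : IsOpen V)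
    (hf : ContDiffOn ℝ (⊤ : ℕ∞) f V) (p w : G) (j : ℕ) {s : ℝ}
    (hs : p + s • w ∈ V) :
    HasDerivAt (iteratedDeriv j (fun s' : ℝ => f (p + s' • w)))
      (iteratedFDeriv ℝ (j + 1) f (p + s • w) (fun _ => w)) s := by
  have hSopen : IsOpen {s' : ℝ | p + s' • w ∈ V} := hV.preimage (by continuity)
  exact (hasDerivAt_iterchain hV hf p w j hs).congr_of_eventuallyEq
    (Filter.eventuallyEq_of_mem (hSopen.mem_nhds hs)
      (fun s' hs' => iterderiv_line hV hf p w j s' hs'))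

lemma iterderivWithin_Icc_eq {u : ℝ → ℝ} {S : Set ℝ} (hS : IsOpen S)
    (hu : ContDiffOn ℝ (⊤ : ℕ∞) u S) (hsub : Icc (0:ℝ) 1 ⊆ S) (j : ℕ) {s : ℝ}
    (hs : s ∈ Icc (0:ℝ) 1) :
    iteratedDerivWithin j u (Icc (0:ℝ) 1) s = iteratedDeriv j u s := by
  have h1 : HasFTaylorSeriesUpToOn (⊤ : ℕ∞) u (ftaylorSeriesWithin ℝ u S) S :=
    hu.ftaylorSeriesWithin hS.uniqueDiffOn
  have h2 := (h1.mono hsub).eq_iteratedFDerivWithin_of_uniqueDiffOn (m := j)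
    (by exact_mod_cast le_top) (uniqueDiffOn_Icc one_pos) hs
  have h3 : ftaylorSeriesWithin ℝ u S s j = iteratedFDerivWithin ℝ j u S s := rfl
  rw [iteratedDerivWithin_eq_iteratedFDerivWithin, ← h2, h3,
    iteratedFDerivWithin_of_isOpen j hS (hsub hs), iteratedDeriv_eq_iteratedFDeriv]

variable {G : Type*} [NormedAddCommGroup G] [NormedSpace ℝ G]

lemma taylor_bound {f : G → ℝ} {V : Set G} (hV : IsOpen V)
    (hf : ContDiffOn ℝ (⊤ : ℕ∞) f V) (p w : G) (k : ℕ)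
    (hseg : ∀ s : ℝ, s ∈ Icc (0:ℝ) 1 → p + s • w ∈ V) {M : ℝ}
    (hM : ∀ s : ℝ, s ∈ Icc (0:ℝ) 1 → ‖iteratedFDeriv ℝ (k+1) f (p + s • w)‖ ≤ M) :
    |f (p + w) - ∑ j ∈ Finset.range (k+1),
        ((j : ℕ).factorial : ℝ)⁻¹ * iteratedFDeriv ℝ j f p (fun _ => w)|
      ≤ M * ‖w‖ ^ (k+1) / ((k+1).factorial : ℝ) := by
  set u : ℝ → ℝ := fun s' => f (p + s' • w) with hu_def
  set S : Set ℝ := {s' : ℝ | p + s' • w ∈ V} with hS_def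
  have hSopen : IsOpen S := hV.preimage (by continuity)
  have hsub : Icc (0:ℝ) 1 ⊆ S := fun s hs => hseg s hs
  have hγ : ContDiff ℝ (⊤ : ℕ∞) (fun s' : ℝ => p + s' • w) :=
    contDiff_const.add (contDiff_id.smul contDiff_const)
  have hu : ContDiffOn ℝ (⊤ : ℕ∞) u S :=
    hf.comp hγ.contDiffOn (fun s hs => hs)
  -- Taylor with Lagrange remainder on [0,1]
  have hconts : ContDiffOn ℝ (k : ℕ∞) u (Icc 0 1) :=
    (hu.mono hsub).of_le (by exact_mod_cast le_top)
  have hdiff : DifferentiableOn ℝ (iteratedDerivWithin k u (Icc 0 1)) (Ioo 0 1) := by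
    intro s hs
    have hsI : s ∈ Icc (0:ℝ) 1 := Ioo_subset_Icc_self hs
    have hsS : s ∈ S := hsub hsI
    have hd : DifferentiableAt ℝ (iteratedDeriv k u) s :=
      (hasDerivAt_iterderiv_line hV hf p w k hsS).differentiableAt
    refine (hd.differentiableWithinAt).congr (fun y hy => ?_) ?_
    · exact iterderivWithin_Icc_eq hSopen hu hsub k (Ioo_subset_Icc_self hy)
    · exact iterderivWithin_Icc_eq hSopen hu hsub k hsI
  obtain ⟨c, hc, hTay⟩ := taylor_mean_remainder_lagrange (n := k) (x₀ := 0) (x := 1)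
    (by norm_num) (by rw [uIcc_of_le zero_le_one]; exact hconts)
    (by rw [uIcc_of_le zero_le_one, uIoo_of_le zero_le_one]; exact hdiff)
  rw [uIoo_of_le zero_le_one] at hc
  rw [uIcc_of_le zero_le_one] at hTay
  have hcI : c ∈ Icc (0:ℝ) 1 := Ioo_subset_Icc_self hc
  -- identify the Taylor polynomial
  have hpoly : taylorWithinEval u k (Icc 0 1) 0 1
      = ∑ j ∈ Finset.range (k+1),
          ((j : ℕ).factorial : ℝ)⁻¹ * iteratedFDeriv ℝ j f p (fun _ => w) := by
    rw [taylor_within_apply]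
    refine Finset.sum_congr rfl (fun j hj => ?_)
    have h0 : (0:ℝ) ∈ Icc (0:ℝ) 1 := by norm_num
    rw [iterderivWithin_Icc_eq hSopen hu hsub j h0,
      iterderiv_line hV hf p w j 0 (hsub h0)]
    simp
  have hrem : iteratedDerivWithin (k+1) u (Icc 0 1) c
      = iteratedFDeriv ℝ (k+1) f (p + c • w) (fun _ => w) := by
    rw [iterderivWithin_Icc_eq hSopen hu hsub (k+1) hcI,
      iterderiv_line hV hf p w (k+1) c (hsub hcI)]
  have hu1 : u 1 = f (p + w) := by simp [hu_def]
  rw [hu1, hpoly] at hTay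
  rw [hTay]
  have hbound : |iteratedFDeriv ℝ (k+1) f (p + c • w) (fun _ => w)|
      ≤ M * ‖w‖ ^ (k+1) := by
    calc |iteratedFDeriv ℝ (k+1) f (p + c • w) (fun _ => w)|
        ≤ ‖iteratedFDeriv ℝ (k+1) f (p + c • w)‖ * ∏ _i : Fin (k+1), ‖w‖ :=
          (iteratedFDeriv ℝ (k+1) f (p + c • w)).le_opNorm _
      _ = ‖iteratedFDeriv ℝ (k+1) f (p + c • w)‖ * ‖w‖ ^ (k+1) := by
          simp [Finset.prod_const]
      _ ≤ M * ‖w‖ ^ (k+1) := by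
          exact mul_le_mul_of_nonneg_right (hM c hcI)
            (pow_nonneg (norm_nonneg _) _)
  rw [hrem]
  rw [abs_div]
  simp only [sub_zero, one_pow, mul_one]
  rw [abs_of_pos (by positivity : (0:ℝ) < ((k+1).factorial : ℝ))]
  gcongr

end aux

section aux2
variable {n : ℕ}
local notation "E" => EuclideanSpace ℝ (Fin n)

lemma euclid_decomp (z : EuclideanSpace ℝ (Fin n)) :
    ((0 : EuclideanSpace ℝ (Fin n)), z)
      = ∑ i : Fin n, z i • ((0 : EuclideanSpace ℝ (Fin n)), EuclideanSpace.single i (1:ℝ)) := by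
  rw [Prod.ext_iff]
  constructor
  · rw [Prod.fst_sum]; simp
  · rw [Prod.snd_sum]
    ext j
    rw [WithLp.ofLp_sum, Finset.sum_apply]
    simp [EuclideanSpace.single_apply]

lemma expand_multilinear {j : ℕ}
    (T : ContinuousMultilinearMap ℝ
      (fun _ : Fin j => (EuclideanSpace ℝ (Fin n) × EuclideanSpace ℝ (Fin n))) ℝ)
    (z : EuclideanSpace ℝ (Fin n)) :
    T (fun _ => ((0 : EuclideanSpace ℝ (Fin n)), z))
      = ∑ r : Fin j → Fin n, (∏ m, z (r m)) *
          T (fun m => ((0 : EuclideanSpace ℝ (Fin n)), EuclideanSpace.single (r m) (1:ℝ))) := by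
  classical
  have h1 : (fun _ : Fin j => ((0 : EuclideanSpace ℝ (Fin n)), z))
      = fun _ : Fin j => ∑ i : Fin n, z i •
          ((0 : EuclideanSpace ℝ (Fin n)), EuclideanSpace.single i (1:ℝ)) :=
    funext fun _ => euclid_decomp z
  rw [h1, T.map_sum]
  refine Finset.sum_congr rfl (fun r _ => ?_)
  rw [T.map_smul_univ]
  simp [smul_eq_mul]

lemma monomial_eq {j : ℕ} (r : Fin j → Fin n) (z : EuclideanSpace ℝ (Fin n)) :
    ∏ m, z (r m)
      = ∏ i : Fin n, z i ^ (Finset.univ.filter (fun m => r m = i)).card := by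
  classical
  rw [← Finset.prod_fiberwise Finset.univ r (fun m => z (r m))]
  refine Finset.prod_congr rfl (fun i _ => ?_)
  rw [Finset.prod_congr rfl (fun m hm => ?_), Finset.prod_const]
  rw [(Finset.mem_filter.1 hm).2]

lemma card_fiber_sum {j : ℕ} (r : Fin j → Fin n) :
    ∑ i : Fin n, (Finset.univ.filter (fun m => r m = i)).card = j := by
  classical
  rw [← Finset.card_eq_sum_card_fiberwise (fun m (_ : m ∈ Finset.univ) => Finset.mem_univ (r m))]
  simp

lemma cont_mul_of_tsupport {X : Type*} [TopologicalSpace X] {g h : X → ℝ} {V : Set X}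
    (hV : IsOpen V) (hg : ContinuousOn g V) (hh : Continuous h)
    (hsupp : tsupport h ⊆ V) : Continuous fun x => g x * h x := by
  rw [continuous_iff_continuousAt]
  intro x
  by_cases hx : x ∈ V
  · exact (hg.continuousAt (hV.mem_nhds hx)).mul hh.continuousAt
  · have hx' : x ∈ (tsupport h)ᶜ := fun hc => hx (hsupp hc)
    have hev : (fun x => g x * h x) =ᶠ[nhds x] fun _ => 0 :=
      Filter.eventuallyEq_of_mem ((isClosed_tsupport h).isOpen_compl.mem_nhds hx')
        (fun y hy => by simp [image_eq_zero_of_notMem_tsupport hy])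
    exact ContinuousAt.congr continuousAt_const hev.symm

variable {φ : EuclideanSpace ℝ (Fin n) → ℝ}

lemma mono_integrable (hφ : Continuous φ) (hφc : HasCompactSupport φ) (α : Fin n → ℕ) :
    Integrable (fun z : EuclideanSpace ℝ (Fin n) => (∏ i, z i ^ α i) * φ z) := by
  have hc : Continuous fun z : EuclideanSpace ℝ (Fin n) => ∏ i, z i ^ α i := by
    refine continuous_finset_prod _ (fun i _ => ?_)
    exact ((EuclideanSpace.proj i).continuous).pow _
  exact (hc.mul hφ).integrable_of_hasCompactSupport (hφc.mul_left)

lemma fiber_integrable (hφ : Continuous φ) (hφc : HasCompactSupport φ)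
    {j : ℕ} (r : Fin j → Fin n) :
    Integrable (fun z : EuclideanSpace ℝ (Fin n) => (∏ m, z (r m)) * φ z) := by
  simp_rw [monomial_eq r]
  exact mono_integrable hφ hφc _

lemma Pterm_integrable (hφ : Continuous φ) (hφc : HasCompactSupport φ) {j : ℕ}
    (T : ContinuousMultilinearMap ℝ
      (fun _ : Fin j => (EuclideanSpace ℝ (Fin n) × EuclideanSpace ℝ (Fin n))) ℝ) :
    Integrable (fun z : EuclideanSpace ℝ (Fin n) =>
      T (fun _ => ((0 : EuclideanSpace ℝ (Fin n)), z)) * φ z) := by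
  classical
  have h : (fun z : EuclideanSpace ℝ (Fin n) =>
      T (fun _ => ((0 : EuclideanSpace ℝ (Fin n)), z)) * φ z)
      = fun z => ∑ r : Fin j → Fin n,
          T (fun m => ((0 : EuclideanSpace ℝ (Fin n)), EuclideanSpace.single (r m) (1:ℝ)))
            * ((∏ m, z (r m)) * φ z) := by
    funext z
    rw [expand_multilinear, Finset.sum_mul]
    exact Finset.sum_congr rfl (fun r _ => by ring)
  rw [h]
  exact integrable_finset_sum _ (fun r _ => (fiber_integrable hφ hφc r).const_mul _)

lemma Pterm_zero (hφ : Continuous φ) (hφc : HasCompactSupport φ) {k : ℕ}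
    (hφmom : ∀ α : Fin n → ℕ, 1 ≤ ∑ i, α i → ∑ i, α i ≤ k →
      (∫ x : EuclideanSpace ℝ (Fin n), (∏ i, x i ^ α i) * φ x) = 0)
    {j : ℕ} (hj1 : 1 ≤ j) (hjk : j ≤ k)
    (T : ContinuousMultilinearMap ℝ
      (fun _ : Fin j => (EuclideanSpace ℝ (Fin n) × EuclideanSpace ℝ (Fin n))) ℝ) :
    (∫ z : EuclideanSpace ℝ (Fin n),
      T (fun _ => ((0 : EuclideanSpace ℝ (Fin n)), z)) * φ z) = 0 := by
  classical
  have h : (fun z : EuclideanSpace ℝ (Fin n) =>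
      T (fun _ => ((0 : EuclideanSpace ℝ (Fin n)), z)) * φ z)
      = fun z => ∑ r : Fin j → Fin n,
          T (fun m => ((0 : EuclideanSpace ℝ (Fin n)), EuclideanSpace.single (r m) (1:ℝ)))
            * ((∏ m, z (r m)) * φ z) := by
    funext z
    rw [expand_multilinear, Finset.sum_mul]
    exact Finset.sum_congr rfl (fun r _ => by ring)
  rw [h, integral_finset_sum _ (fun r _ => (fiber_integrable hφ hφc r).const_mul _)]
  refine Finset.sum_eq_zero (fun r _ => ?_)
  rw [integral_const_mul]
  have hz : (∫ z : EuclideanSpace ℝ (Fin n), (∏ m, z (r m)) * φ z) = 0 := by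
    simp_rw [monomial_eq r]
    refine hφmom _ ?_ ?_
    · rw [card_fiber_sum r]; exact hj1
    · rw [card_fiber_sum r]; exact hjk
  rw [hz, mul_zero]

end aux2

/-- Let `t` be continuous on an open `U' ⊆ ℝⁿ`, `f ∈ C^∞(U' × U')`, and let
`φ` be a test function with `∫ φ = 1` and vanishing moments of orders `1,…,k`.  Then for every
compact `K ⊆ U'`,
`sup_{x∈K} |∫ (f(x,y) − f(x,x))·ε^{−n}φ((y−x)/ε) dy| = O(ε^{k+1})` as `ε → 0`. -/
theorem smoothing_kernel_taylor_estimate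
    {n : ℕ} (hn : 0 < n) (U' : Set (EuclideanSpace ℝ (Fin n))) (hU' : IsOpen U')
    (t : EuclideanSpace ℝ (Fin n) → ℝ) (ht : ContinuousOn t U')
    (f : EuclideanSpace ℝ (Fin n) × EuclideanSpace ℝ (Fin n) → ℝ)
    (hf : ContDiffOn ℝ (⊤ : ℕ∞) f (U' ×ˢ U'))
    (k : ℕ) (φ : EuclideanSpace ℝ (Fin n) → ℝ)
    (hφ : ContDiff ℝ (⊤ : ℕ∞) φ) (hφc : HasCompactSupport φ)
    (hφint : (∫ x, φ x) = 1)
    (hφmom : ∀ α : Fin n → ℕ, 1 ≤ ∑ i, α i → ∑ i, α i ≤ k →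
      (∫ x, (∏ i, x i ^ α i) * φ x) = 0)
    (K : Set (EuclideanSpace ℝ (Fin n))) (hK : IsCompact K) (hKU : K ⊆ U') :
    ∃ C > (0 : ℝ), ∃ ε₀ > (0 : ℝ), ∀ ε ∈ Set.Ioc (0 : ℝ) ε₀, ∀ x ∈ K,
      |∫ y, (f (x, y) - f (x, x)) * (ε ^ n)⁻¹ * φ (ε⁻¹ • (y - x))| ≤ C * ε ^ (k + 1) := by
  classical
  obtain ⟨R, hR0, hRsub⟩ : ∃ R : ℝ, 0 < R ∧ tsupport φ ⊆ Metric.closedBall 0 R :=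
    hφc.isBounded.subset_closedBall_lt 0 0
  obtain ⟨δ, hδ0, hδsub⟩ := hK.exists_thickening_subset_open hU' hKU
  set L : Set (EuclideanSpace ℝ (Fin n)) := Metric.cthickening (δ/2) K with hL_def
  have hLcomp : IsCompact L := hK.cthickening
  have hLU : L ⊆ U' :=
    (Metric.cthickening_subset_thickening' hδ0 (half_lt_self hδ0) K).trans hδsub
  have hKL : K ⊆ L := Metric.self_subset_cthickening K
  have hball : ∀ x ∈ K, ∀ w : EuclideanSpace ℝ (Fin n), ‖w‖ ≤ δ/2 → x + w ∈ L := by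
    intro x hx w hw
    refine Metric.mem_cthickening_of_dist_le (x + w) x (δ/2) K hx ?_
    rw [dist_eq_norm]
    simpa using hw
  -- bound on (k+1)-st derivative on L ×ˢ L
  have hLL : IsCompact (L ×ˢ L) := hLcomp.prod hLcomp
  have hLLU : L ×ˢ L ⊆ U' ×ˢ U' := Set.prod_mono hLU hLU
  have hderivcont : ContinuousOn (iteratedFDeriv ℝ (k+1) f) (U' ×ˢ U') := by
    refine (hf.continuousOn_iteratedFDerivWithin (by exact_mod_cast le_top)
      ((hU'.prod hU').uniqueDiffOn)).congr ?_
    intro q hq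
    exact (iteratedFDerivWithin_of_isOpen (k+1) (hU'.prod hU') hq).symm
  obtain ⟨M, hM⟩ := hLL.exists_bound_of_continuousOn (hderivcont.mono hLLU)
  set M' : ℝ := max M 0 with hM'_def
  have hM'0 : 0 ≤ M' := le_max_right _ _
  have hMbnd : ∀ q ∈ L ×ˢ L, ‖iteratedFDeriv ℝ (k+1) f q‖ ≤ M' :=
    fun q hq => (hM q hq).trans (le_max_left _ _)
  set B : ℝ := M' * R ^ (k+1) / ((k+1).factorial : ℝ) with hB_def
  have hB0 : 0 ≤ B := by positivity
  set ε₀ : ℝ := δ / (2 * (R + 1)) with hε₀_def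
  have hε₀0 : 0 < ε₀ := by positivity
  set C : ℝ := B * (∫ z, ‖φ z‖) + 1 with hC_def
  have hC0 : 0 < C := by positivity
  refine ⟨C, hC0, ε₀, hε₀0, ?_⟩
  rintro ε ⟨hε0, hεle⟩ x hx
  -- geometry
  have hgeo : ∀ z ∈ Metric.closedBall (0 : EuclideanSpace ℝ (Fin n)) R,
      ∀ s ∈ Icc (0:ℝ) 1, x + s • (ε • z) ∈ L := by
    intro z hz s hs
    refine hball x hx _ ?_
    rw [norm_smul, norm_smul]
    have hz' : ‖z‖ ≤ R := by simpa [mem_closedBall_iff_norm] using hz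
    have hs' : |s| ≤ 1 := abs_le.2 ⟨by linarith [hs.1], hs.2⟩
    have h1 : |s| * (‖(ε:ℝ)‖ * ‖z‖) ≤ 1 * (ε * R) := by
      apply mul_le_mul hs' ?_ (by positivity) zero_le_one
      rw [Real.norm_eq_abs, abs_of_pos hε0]
      exact mul_le_mul le_rfl hz' (norm_nonneg z) (le_of_lt hε0)
    have h2 : ε * R ≤ δ / 2 := by
      have h2a : ε * (2 * (R + 1)) ≤ δ := (le_div_iff₀ (by positivity)).1 hεle
      nlinarith [hε0.le]
    calc |s| * (‖(ε:ℝ)‖ * ‖z‖) ≤ 1 * (ε * R) := h1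
      _ = ε * R := one_mul _
      _ ≤ δ / 2 := h2
  have hgeoT : ∀ z ∈ tsupport φ, x + ε • z ∈ L := by
    intro z hz
    have := hgeo z (hRsub hz) 1 (by norm_num)
    simpa using this
  -- the rescaled integrand
  set F : EuclideanSpace ℝ (Fin n) → ℝ := fun z => f (x, x + ε • z) - f (x, x) with hF_def
  set P : (j : ℕ) → EuclideanSpace ℝ (Fin n) → ℝ :=
    fun j z => iteratedFDeriv ℝ j f (x, x) (fun _ : Fin j => ((0 : EuclideanSpace ℝ (Fin n)), z))
    with hP_def
  set Q : EuclideanSpace ℝ (Fin n) → ℝ :=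
    fun z => ∑ j ∈ Finset.range k, (((j+1).factorial : ℝ))⁻¹ * ε ^ (j+1) * P (j+1) z with hQ_def
  -- Taylor estimate pointwise on the support
  have hTayB : ∀ z ∈ tsupport φ, |F z - Q z| ≤ B * ε ^ (k+1) := by
    intro z hz
    have hzR : z ∈ Metric.closedBall (0 : EuclideanSpace ℝ (Fin n)) R := hRsub hz
    set w : EuclideanSpace ℝ (Fin n) × EuclideanSpace ℝ (Fin n) :=
      ((0 : EuclideanSpace ℝ (Fin n)), ε • z) with hw_def
    have hpt : ∀ s : ℝ, (x, x) + s • w = (x, x + s • (ε • z)) := by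
      intro s; simp [hw_def, Prod.ext_iff]
    have hseg : ∀ s : ℝ, s ∈ Icc (0:ℝ) 1 → (x, x) + s • w ∈ U' ×ˢ U' := by
      intro s hs
      rw [hpt s]
      exact ⟨hKU hx, hLU (hgeo z hzR s hs)⟩
    have hMs : ∀ s : ℝ, s ∈ Icc (0:ℝ) 1 →
        ‖iteratedFDeriv ℝ (k+1) f ((x, x) + s • w)‖ ≤ M' := by
      intro s hs
      rw [hpt s]
      exact hMbnd _ ⟨hKL hx, hgeo z hzR s hs⟩
    have htay := taylor_bound (hU'.prod hU') hf (x, x) w k hseg hMs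
    -- rewrite the Taylor sum
    have hsum : ∑ j ∈ Finset.range (k+1),
        ((j : ℕ).factorial : ℝ)⁻¹ * iteratedFDeriv ℝ j f (x, x) (fun _ => w)
        = f (x, x) + Q z := by
      rw [Finset.sum_range_succ']
      have h0 : ((0 : ℕ).factorial : ℝ)⁻¹ *
          iteratedFDeriv ℝ 0 f (x, x) (fun _ => w) = f (x, x) := by
        simp [iteratedFDeriv_zero_apply]
      rw [h0, add_comm]
      congr 1
      refine Finset.sum_congr rfl (fun j _ => ?_)
      have hwsmul : (fun _ : Fin (j+1) => w) = fun _ : Fin (j+1) =>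
          ε • ((0 : EuclideanSpace ℝ (Fin n)), z) := by
        funext m; simp [hw_def, Prod.ext_iff]
      rw [hwsmul]
      have := (iteratedFDeriv ℝ (j+1) f (x, x)).map_smul_univ
        (fun _ : Fin (j+1) => ε) (fun _ => ((0 : EuclideanSpace ℝ (Fin n)), z))
      simp only [Finset.prod_const, Finset.card_univ, Fintype.card_fin] at this
      rw [this, smul_eq_mul]
      ring
    have hpw : (x, x) + w = (x, x + ε • z) := by simpa using hpt 1
    rw [hpw, hsum] at htay
    have hFQ : f (x, x + ε • z) - (f (x, x) + Q z) = F z - Q z := by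
      simp [hF_def]; ring
    rw [hFQ] at htay
    refine htay.trans ?_
    have hwnorm : ‖w‖ ≤ ε * R := by
      have hz' : ‖z‖ ≤ R := by simpa [mem_closedBall_iff_norm] using hzR
      rw [hw_def, Prod.norm_def]
      simp only [norm_zero]
      rw [max_eq_right (norm_nonneg _), norm_smul, Real.norm_eq_abs, abs_of_pos hε0]
      exact mul_le_mul le_rfl hz' (norm_nonneg z) (le_of_lt hε0)
    calc M' * ‖w‖ ^ (k+1) / ((k+1).factorial : ℝ)
        ≤ M' * (ε * R) ^ (k+1) / ((k+1).factorial : ℝ) := by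
          gcongr
      _ = B * ε ^ (k+1) := by rw [hB_def, mul_pow]; ring
  -- integrability
  have hφcont : Continuous φ := hφ.continuous
  have hVopen : IsOpen {z : EuclideanSpace ℝ (Fin n) | x + ε • z ∈ U'} :=
    hU'.preimage (continuous_const.add (continuous_id.const_smul ε))
  have hFcont : ContinuousOn F {z : EuclideanSpace ℝ (Fin n) | x + ε • z ∈ U'} := by
    have h1 : ContinuousOn (fun z : EuclideanSpace ℝ (Fin n) => f (x, x + ε • z))
        {z : EuclideanSpace ℝ (Fin n) | x + ε • z ∈ U'} := by
      refine (hf.continuousOn).comp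
        (continuous_const.prodMk
          (continuous_const.add (continuous_id.const_smul ε))).continuousOn ?_
      intro z hz
      exact ⟨hKU hx, hz⟩
    exact h1.sub continuousOn_const
  have hsuppV : tsupport φ ⊆ {z : EuclideanSpace ℝ (Fin n) | x + ε • z ∈ U'} :=
    fun z hz => hLU (hgeoT z hz)
  have hFφcont : Continuous fun z => F z * φ z :=
    cont_mul_of_tsupport hVopen hFcont hφcont hsuppV
  have hFφint : Integrable fun z => F z * φ z :=
    hFφcont.integrable_of_hasCompactSupport hφc.mul_left
  have hQφint : Integrable fun z => Q z * φ z := by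
    have h : (fun z => Q z * φ z) = fun z => ∑ j ∈ Finset.range k,
        (((j+1).factorial : ℝ))⁻¹ * ε ^ (j+1) * (P (j+1) z * φ z) := by
      funext z
      rw [hQ_def, Finset.sum_mul]
      exact Finset.sum_congr rfl (fun j _ => by ring)
    rw [h]
    exact integrable_finset_sum _ (fun j _ =>
      ((Pterm_integrable hφcont hφc _).const_mul _))
  have hQφzero : (∫ z, Q z * φ z) = 0 := by
    have h : (fun z => Q z * φ z) = fun z => ∑ j ∈ Finset.range k,
        (((j+1).factorial : ℝ))⁻¹ * ε ^ (j+1) * (P (j+1) z * φ z) := by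
      funext z
      rw [hQ_def, Finset.sum_mul]
      exact Finset.sum_congr rfl (fun j _ => by ring)
    rw [h, integral_finset_sum _ (fun j _ =>
      ((Pterm_integrable hφcont hφc _).const_mul _))]
    refine Finset.sum_eq_zero (fun j hj => ?_)
    rw [integral_const_mul, Pterm_zero hφcont hφc hφmom
      (Nat.succ_le_succ (Nat.zero_le j)) (Finset.mem_range.1 hj) _, mul_zero]
  -- the key bound on the rescaled integral
  have hIbound : |∫ z, F z * φ z| ≤ B * ε ^ (k+1) * ∫ z, ‖φ z‖ := by
    have hsplit : (∫ z, F z * φ z) = ∫ z, (F z - Q z) * φ z := by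
      have h : (fun z => (F z - Q z) * φ z) = fun z => F z * φ z - Q z * φ z := by
        funext z; ring
      rw [h, integral_sub hFφint hQφint, hQφzero, sub_zero]
    rw [hsplit]
    have hptbd : ∀ z, ‖(F z - Q z) * φ z‖ ≤ B * ε ^ (k+1) * ‖φ z‖ := by
      intro z
      by_cases hz : z ∈ tsupport φ
      · rw [norm_mul]
        exact mul_le_mul_of_nonneg_right (hTayB z hz) (norm_nonneg _)
      · rw [image_eq_zero_of_notMem_tsupport hz, mul_zero, norm_zero]
        positivity
    calc |∫ z, (F z - Q z) * φ z| ≤ ∫ z, B * ε ^ (k+1) * ‖φ z‖ := by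
          refine norm_integral_le_of_norm_le ((hφcont.norm.integrable_of_hasCompactSupport
            hφc.norm).const_mul _) (Filter.Eventually.of_forall hptbd)
      _ = B * ε ^ (k+1) * ∫ z, ‖φ z‖ := integral_const_mul _ _
  -- change of variables
  have hCOV : (∫ y, (f (x, y) - f (x, x)) * (ε ^ n)⁻¹ * φ (ε⁻¹ • (y - x)))
      = ∫ z, F z * φ z := by
    have h1 : (fun y => (f (x, y) - f (x, x)) * (ε ^ n)⁻¹ * φ (ε⁻¹ • (y - x)))
        = fun y => (ε ^ n)⁻¹ * ((f (x, y) - f (x, x)) * φ (ε⁻¹ • (y - x))) := by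
      funext y; ring
    rw [h1, integral_const_mul]
    have h2 : (fun w : EuclideanSpace ℝ (Fin n) =>
          (f (x, x + w) - f (x, x)) * φ (ε⁻¹ • ((x + w) - x)))
        = fun w => (f (x, x + w) - f (x, x)) * φ (ε⁻¹ • w) := by
      funext w; rw [add_sub_cancel_left]
    have h3 : (∫ y, (f (x, y) - f (x, x)) * φ (ε⁻¹ • (y - x)))
        = ∫ w, (f (x, x + w) - f (x, x)) * φ (ε⁻¹ • w) := by
      rw [← h2]
      exact (integral_add_left_eq_self
        (fun y => (f (x, y) - f (x, x)) * φ (ε⁻¹ • (y - x))) x).symm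
    have h5 := MeasureTheory.Measure.integral_comp_smul (μ := volume)
      (fun w => (f (x, x + w) - f (x, x)) * φ (ε⁻¹ • w)) ε
    rw [finrank_euclideanSpace_fin] at h5
    have h4 : (fun z : EuclideanSpace ℝ (Fin n) =>
          (f (x, x + ε • z) - f (x, x)) * φ (ε⁻¹ • ε • z))
        = fun z => F z * φ z := by
      funext z
      rw [smul_smul, inv_mul_cancel₀ (ne_of_gt hε0), one_smul]
    rw [h4] at h5
    rw [h3, h5, abs_of_pos (by positivity : (0:ℝ) < (ε ^ n)⁻¹), smul_eq_mul]
  rw [hCOV]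
  refine hIbound.trans ?_
  have hφn : 0 ≤ ∫ z, ‖φ z‖ := integral_nonneg (fun z => norm_nonneg _)
  calc B * ε ^ (k+1) * ∫ z, ‖φ z‖ = (B * ∫ z, ‖φ z‖) * ε ^ (k+1) := by ring
    _ ≤ C * ε ^ (k+1) := by
        apply mul_le_mul_of_nonneg_right _ (le_of_lt (by positivity))
        rw [hC_def]; linarith
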